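/- Consider a random-order stream of m distinct-rank elements processed by the randomized TOP N matrix algorithm with d rows and w columns, where each element is assigned to a uniformly random row and each row retains its w largest elements seen so far, passing (not pruning) an element only if it is among the w largest elements mapped to its row so far. Then the expected number of elements that are not pruned is at most w·d·ln(m·e/(w·d)), assuming m ≥ w·d. -/

import Mathlib

open Finset

private lemma log_step (n : ℕ) (hn : 1 ≤ n) :
    (1:ℝ)/(n+1) ≤ Real.log (n+1) - Real.log n := by
  have hn0 : (0:ℝ) < n := by exact_mod_cast hn
  have hn1 : (0:ℝ) < (n:ℝ)+1 := by positivity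
  have h := Real.log_le_sub_one_of_pos (show (0:ℝ) < (n:ℝ)/((n:ℝ)+1) by positivity)
  rw [Real.log_div (ne_of_gt hn0) (ne_of_gt hn1)] at h
  have : (n:ℝ)/((n:ℝ)+1) - 1 = -(1/((n:ℝ)+1)) := by field_simp; ring
  rw [this] at h
  linarith

private lemma harm_bound (w : ℕ) (hw : 1 ≤ w) :
    ∀ M, w ≤ M → ∑ j ∈ Finset.Icc (w+1) M, (1:ℝ)/j ≤ Real.log M - Real.log w := by
  intro M
  induction M with
  | zero => intro h; omega
  | succ n ih =>
    intro h
    rcases Nat.lt_or_ge w (n+1) with hlt | hge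
    · have hwn : w ≤ n := Nat.lt_succ_iff.mp hlt
      have hstep : (1:ℝ)/(n+1) ≤ Real.log (n+1) - Real.log n :=
        log_step n (le_trans hw hwn)
      have : Finset.Icc (w+1) (n+1) = insert (n+1) (Finset.Icc (w+1) n) := by
        ext x; simp [Finset.mem_Icc]; omega
      rw [this, Finset.sum_insert (by simp)]
      have := ih hwn
      push_cast
      push_cast at this hstep
      linarith
    · have hw' : w = n + 1 := le_antisymm h hge
      subst hw'
      rw [Finset.Icc_eq_empty (by omega), Finset.sum_empty]
      simp

private lemma row_bound (w M : ℕ) (hw : 1 ≤ w) (c : ℝ) (hc : (w:ℝ) ≤ c) :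
    ∑ j ∈ Finset.Icc 1 M, min ((w : ℝ) / j) 1
      ≤ w * Real.log (c / w) + (w / c) * M := by
  have hw0 : (0:ℝ) < w := by exact_mod_cast hw
  have hc0 : (0:ℝ) < c := lt_of_lt_of_le hw0 hc
  have hlog1 : 1 - (w:ℝ)/c ≤ Real.log (c/w) := by
    have h := Real.log_le_sub_one_of_pos (show (0:ℝ) < (w:ℝ)/c by positivity)
    rw [show (c/(w:ℝ)) = ((w:ℝ)/c)⁻¹ by field_simp, Real.log_inv]
    linarith
  rcases le_or_gt M w with hMw | hwM
  · -- all terms are 1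
    have hterm : ∀ j ∈ Finset.Icc 1 M, min ((w : ℝ) / j) 1 = 1 := by
      intro j hj
      simp only [Finset.mem_Icc] at hj
      have hj0 : (0:ℝ) < j := by exact_mod_cast hj.1
      have : (1:ℝ) ≤ (w:ℝ)/j := by
        rw [le_div_iff₀ hj0]; exact_mod_cast by simpa using Nat.le_trans hj.2 hMw
      simp [min_eq_right this]
    have hsum : ∑ j ∈ Finset.Icc 1 M, min ((w : ℝ) / j) 1 = M := by
      rw [Finset.sum_congr rfl hterm, Finset.sum_const, Nat.card_Icc]
      simp
    rw [hsum]
    have hM0 : (0:ℝ) ≤ M := by positivity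
    have hMwR : (M:ℝ) ≤ w := by exact_mod_cast hMw
    have h1 : (0:ℝ) ≤ 1 - (w:ℝ)/c := by
      rw [sub_nonneg, div_le_one hc0]; exact hc
    nlinarith [mul_le_mul_of_nonneg_right hMwR h1]
  · -- split
    have hsplit : Finset.Icc 1 M = Finset.Icc 1 w ∪ Finset.Icc (w+1) M := by
      ext x; simp [Finset.mem_Icc, Finset.mem_union]; omega
    have hdisj : Disjoint (Finset.Icc 1 w) (Finset.Icc (w+1) M) := by
      simp [Finset.disjoint_left, Finset.mem_Icc]; omega
    rw [hsplit, Finset.sum_union hdisj]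
    have hterm : ∀ j ∈ Finset.Icc 1 w, min ((w : ℝ) / j) 1 = 1 := by
      intro j hj
      simp only [Finset.mem_Icc] at hj
      have hj0 : (0:ℝ) < j := by exact_mod_cast hj.1
      have : (1:ℝ) ≤ (w:ℝ)/j := by
        rw [le_div_iff₀ hj0]; exact_mod_cast by simpa using hj.2
      simp [min_eq_right this]
    have h1 : ∑ j ∈ Finset.Icc 1 w, min ((w : ℝ) / j) 1 = w := by
      rw [Finset.sum_congr rfl hterm, Finset.sum_const, Nat.card_Icc]
      simp
    have h2 : ∑ j ∈ Finset.Icc (w+1) M, min ((w : ℝ) / j) 1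
        ≤ w * (Real.log M - Real.log w) := by
      calc ∑ j ∈ Finset.Icc (w+1) M, min ((w : ℝ) / j) 1
          ≤ ∑ j ∈ Finset.Icc (w+1) M, (w:ℝ) * (1/j) := by
            refine Finset.sum_le_sum (fun j hj => ?_)
            have : (w:ℝ)*(1/j) = (w:ℝ)/j := by ring
            rw [this]; exact min_le_left _ _
        _ = (w:ℝ) * ∑ j ∈ Finset.Icc (w+1) M, (1:ℝ)/j := by
            rw [Finset.mul_sum]
        _ ≤ w * (Real.log M - Real.log w) := by
            exact mul_le_mul_of_nonneg_left (harm_bound w hw M hwM.le) (le_of_lt hw0)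
    have hM0 : (0:ℝ) < M := by exact_mod_cast (by omega : 0 < M)
    have hkey : Real.log (M/c) ≤ (M:ℝ)/c - 1 :=
      Real.log_le_sub_one_of_pos (by positivity)
    have hlogMc : Real.log (M/c) = Real.log M - Real.log c :=
      Real.log_div (ne_of_gt hM0) (ne_of_gt hc0)
    have hlogcw : Real.log (c/w) = Real.log c - Real.log w :=
      Real.log_div (ne_of_gt hc0) (ne_of_gt hw0)
    have : (w:ℝ) + w*(Real.log M - Real.log w) ≤ w * Real.log (c/w) + (w/c)*M := by
      rw [hlogcw]
      have h3 : Real.log M - Real.log c ≤ (M:ℝ)/c - 1 := by rw [← hlogMc]; exact hkey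
      have h4 : (w:ℝ) * (Real.log M - Real.log c) ≤ w * ((M:ℝ)/c - 1) :=
        mul_le_mul_of_nonneg_left h3 (le_of_lt hw0)
      have h5 : (w:ℝ) * ((M:ℝ)/c) = (w/c)*M := by ring
      nlinarith
    linarith

theorem stmt6 (m d w : ℕ) [NeZero d] (hw : 1 ≤ w) (hm : w * d ≤ m) :
    ∑ ω : Fin m → Fin d,
      ((PMF.uniformOfFintype (Fin m → Fin d)) ω).toReal *
        (∑ b : Fin d,
          ∑ j ∈ Finset.Icc 1 ((Finset.univ.filter (fun i => ω i = b)).card),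
            min ((w : ℝ) / j) 1)
      ≤ w * d * Real.log ((m : ℝ) * Real.exp 1 / (w * d)) := by
  have hd : 1 ≤ d := Nat.one_le_iff_ne_zero.mpr (NeZero.ne d)
  have hm1 : 1 ≤ m := le_trans (by nlinarith) hm
  have hd0 : (0:ℝ) < d := by exact_mod_cast hd
  have hw0 : (0:ℝ) < w := by exact_mod_cast hw
  have hm0 : (0:ℝ) < m := by exact_mod_cast hm1
  set c : ℝ := (m:ℝ)/d with hc_def
  have hc : (w:ℝ) ≤ c := by
    rw [hc_def, le_div_iff₀ hd0]; exact_mod_cast hm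
  have hc0 : (0:ℝ) < c := lt_of_lt_of_le hw0 hc
  -- pointwise bound
  set B : ℝ := (d:ℝ) * (w * Real.log (c/w)) + w * d with hB_def
  have hpoint : ∀ ω : Fin m → Fin d,
      (∑ b : Fin d,
        ∑ j ∈ Finset.Icc 1 ((Finset.univ.filter (fun i => ω i = b)).card),
          min ((w : ℝ) / j) 1) ≤ B := by
    intro ω
    have hcard : ∑ b : Fin d, ((Finset.univ.filter (fun i => ω i = b)).card : ℝ) = m := by
      have h0 : (Finset.univ : Finset (Fin m)).card
          = ∑ b : Fin d, (Finset.univ.filter (fun i => ω i = b)).card :=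
        Finset.card_eq_sum_card_fiberwise (fun x _ => Finset.mem_univ _)
      rw [Finset.card_univ, Fintype.card_fin] at h0
      exact_mod_cast h0.symm
    calc (∑ b : Fin d,
        ∑ j ∈ Finset.Icc 1 ((Finset.univ.filter (fun i => ω i = b)).card),
          min ((w : ℝ) / j) 1)
        ≤ ∑ b : Fin d, (w * Real.log (c/w)
            + (w/c) * ((Finset.univ.filter (fun i => ω i = b)).card : ℝ)) := by
          exact Finset.sum_le_sum (fun b _ => row_bound w _ hw c hc)
      _ = (d:ℝ) * (w * Real.log (c/w)) + (w/c) * m := by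
          rw [Finset.sum_add_distrib, Finset.sum_const, ← Finset.mul_sum, hcard]
          simp [mul_comm]
      _ = B := by
          rw [hB_def]
          congr 1
          rw [hc_def]
          field_simp
  -- sum of probabilities
  have hprob : ∑ ω : Fin m → Fin d,
      ((PMF.uniformOfFintype (Fin m → Fin d)) ω).toReal = 1 := by
    have hcard0 : (Fintype.card (Fin m → Fin d) : ℝ) ≠ 0 := by
      exact_mod_cast Fintype.card_ne_zero
    simp only [PMF.uniformOfFintype_apply]
    rw [Finset.sum_const, Finset.card_univ]
    rw [ENNReal.toReal_inv, ENNReal.toReal_natCast, nsmul_eq_mul]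
    field_simp
  have hBval : B = w * d * Real.log ((m : ℝ) * Real.exp 1 / (w * d)) := by
    have : (m : ℝ) * Real.exp 1 / (w * d) = (c/w) * Real.exp 1 := by
      rw [hc_def]; field_simp
    rw [this, Real.log_mul (by positivity) (by positivity), Real.log_exp, hB_def]
    ring
  calc ∑ ω : Fin m → Fin d,
      ((PMF.uniformOfFintype (Fin m → Fin d)) ω).toReal *
        (∑ b : Fin d,
          ∑ j ∈ Finset.Icc 1 ((Finset.univ.filter (fun i => ω i = b)).card),
            min ((w : ℝ) / j) 1)
      ≤ ∑ ω : Fin m → Fin d,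
          ((PMF.uniformOfFintype (Fin m → Fin d)) ω).toReal * B := by
        refine Finset.sum_le_sum (fun ω _ => ?_)
        exact mul_le_mul_of_nonneg_left (hpoint ω) (ENNReal.toReal_nonneg)
    _ = B := by rw [← Finset.sum_mul, hprob, one_mul]
    _ = _ := hBval
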